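/- The median of the Binomial(n, p) distribution is either ⌊np⌋ or ⌈np⌉; in particular, for any integer s ≥ ⌈np⌉, the Binomial(n,p) CDF satisfies F^{B}_{n,p}(s) ≥ 1/2. -/

import Mathlib

open MeasureTheory Real

noncomputable def binPMF (n : ℕ) (p : ℝ) (s : ℕ) : ℝ :=
  (n.choose s : ℝ) * p ^ s * (1 - p) ^ (n - s)

noncomputable def binCDF (n : ℕ) (p : ℝ) (s : ℤ) : ℝ :=
  ∑ k ∈ Finset.range (s + 1).toNat, binPMF n p k

section BinomialMedianAux
open Set intervalIntegral


/-- Key 2-variable inequality H' -/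
lemma Hprime {U V : ℝ} (hV : 0 < V) (hUV : V < U) :
    (2 + U + V) * (Real.log (1 + U) - Real.log (1 + V)) ≤ (U + V) * (Real.log U - Real.log V) := by
  set m : ℝ := (U + V) / 2 with hm
  set d : ℝ := (U - V) / 2 with hd
  have hm0 : 0 < m := by rw [hm]; linarith
  have hd0 : 0 < d := by rw [hd]; linarith
  have hdm : d < m := by rw [hd, hm]; linarith
  set g : ℝ → ℝ := fun x =>
    m * (Real.log (m + x) - Real.log (m - x)) - (1 + m) * (Real.log (1 + m + x) - Real.log (1 + m - x)) with hg
  have hderiv : ∀ x ∈ Icc (0:ℝ) d, HasDerivAt g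
      (m * (1/(m+x) + 1/(m-x)) - (1+m) * (1/(1+m+x) + 1/(1+m-x))) x := by
    intro x hx
    have h1 : 0 < m + x := by have := hx.1; linarith
    have h2 : 0 < m - x := by have := hx.2; linarith
    have h3 : 0 < 1 + m + x := by linarith
    have h4 : 0 < 1 + m - x := by linarith
    have d1 : HasDerivAt (fun x => Real.log (m + x)) (1/(m+x)) x := by
      simpa using ((hasDerivAt_id x).const_add m).log (by simpa using h1.ne')
    have d2 : HasDerivAt (fun x => Real.log (m - x)) (-(1/(m-x))) x := by
      have := ((hasDerivAt_id x).const_sub m).log (by simpa using h2.ne')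
      simpa [neg_div] using this
    have d3 : HasDerivAt (fun x => Real.log (1 + m + x)) (1/(1+m+x)) x := by
      simpa using ((hasDerivAt_id x).const_add (1+m)).log (by simpa using h3.ne')
    have d4 : HasDerivAt (fun x => Real.log (1 + m - x)) (-(1/(1+m-x))) x := by
      have := ((hasDerivAt_id x).const_sub (1+m)).log (by simpa using h4.ne')
      simpa [neg_div] using this
    have := ((d1.sub d2).const_mul m).sub ((d3.sub d4).const_mul (1+m))
    refine this.congr_deriv ?_
    ring
  have hmono : MonotoneOn g (Icc (0:ℝ) d) := by
    apply monotoneOn_of_deriv_nonneg (convex_Icc _ _)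
    · exact fun x hx => (hderiv x hx).continuousAt.continuousWithinAt
    · intro x hx
      rw [interior_Icc] at hx
      exact (hderiv x (Ioo_subset_Icc_self hx)).differentiableAt.differentiableWithinAt
    · intro x hx
      rw [interior_Icc] at hx
      rw [(hderiv x (Ioo_subset_Icc_self hx)).deriv]
      have h1 : 0 < m + x := by have := hx.1; linarith
      have h2 : 0 < m - x := by have := hx.2; linarith
      have h3 : 0 < 1 + m + x := by linarith
      have h4 : 0 < 1 + m - x := by linarith
      rw [sub_nonneg, div_add_div _ _ (ne_of_gt h1) (ne_of_gt h2),
        div_add_div _ _ (ne_of_gt h3) (ne_of_gt h4), mul_div_assoc', mul_div_assoc',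
        div_le_div_iff₀ (by positivity) (by positivity)]
      nlinarith [sq_nonneg x, sq_nonneg (m*x), hx.1, hx.2]
  have h0 : g 0 = 0 := by simp [hg]
  have hgd : 0 ≤ g d := by
    have := hmono (left_mem_Icc.2 (le_of_lt hd0)) (right_mem_Icc.2 (le_of_lt hd0)) (le_of_lt hd0)
    rw [h0] at this; exact this
  have e1 : m + d = U := by rw [hm, hd]; ring
  have e2 : m - d = V := by rw [hm, hd]; ring
  have e3 : 1 + m + d = 1 + U := by rw [hm, hd]; ring
  have e4 : 1 + m - d = 1 + V := by rw [hm, hd]; ring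
  rw [hg] at hgd
  simp only [e1, e2, e3, e4] at hgd
  rw [hm] at hgd
  linarith [hgd]

/-- Harmonic mean lemma: for level pairs of φ(t) = t^a (1-t)^b. -/
lemma harm {a b : ℕ} (ha : 1 ≤ a) (hb : 1 ≤ b) {t s : ℝ} (ht : 0 < t) (hts : t < s) (hs : s < 1)
    (hlev : t^a * (1-t)^b = s^a * (1-s)^b) :
    2 * (a+b : ℝ) * s * t ≤ a * (s + t) := by
  have hs0 : 0 < s := lt_trans ht hts
  have ht1 : t < 1 := lt_trans hts hs
  have h1t : 0 < 1 - t := by linarith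
  have h1s : 0 < 1 - s := by linarith
  set U : ℝ := (1-t)/t with hU
  set V : ℝ := (1-s)/s with hV
  have hV0 : 0 < V := by positivity
  have hUV : V < U := by
    rw [hU, hV, div_lt_div_iff₀ hs0 ht]
    nlinarith
  -- logs of the level equation
  have hlog : (a:ℝ) * Real.log t + b * Real.log (1-t) = a * Real.log s + b * Real.log (1-s) := by
    have := congrArg Real.log hlev
    rw [Real.log_mul (by positivity) (by positivity), Real.log_mul (by positivity) (by positivity),
      Real.log_pow, Real.log_pow, Real.log_pow, Real.log_pow] at this
    push_cast at this
    linarith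
  set L1 : ℝ := Real.log s - Real.log t with hL1
  set L2 : ℝ := (Real.log (1-t) - Real.log t) - (Real.log (1-s) - Real.log s) with hL2
  -- identifications
  have e1 : Real.log (1 + U) - Real.log (1 + V) = L1 := by
    have : (1:ℝ) + U = 1/t := by rw [hU]; field_simp; ring
    have h2 : (1:ℝ) + V = 1/s := by rw [hV]; field_simp; ring
    rw [this, h2, Real.log_div one_ne_zero (ne_of_gt ht), Real.log_div one_ne_zero (ne_of_gt hs0)]
    rw [hL1]; ring
  have e2 : Real.log U - Real.log V = L2 := by
    rw [hU, hV, Real.log_div (ne_of_gt h1t) (ne_of_gt ht), Real.log_div (ne_of_gt h1s) (ne_of_gt hs0), hL2]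
    try ring
  have key := Hprime hV0 hUV
  rw [e1, e2] at key
  -- constraint : a * L1 = b * (L2 - L1)
  have hcon : (a:ℝ) * L1 = b * (L2 - L1) := by rw [hL1, hL2]; linarith
  have hL2L1 : 0 < L2 - L1 := by
    rw [hL1, hL2]
    have := Real.log_lt_log h1s (by linarith : 1 - s < 1 - t)
    linarith
  -- conclude a*(U+V) ≥ 2*b
  have hUVb : 2 * (b:ℝ) ≤ a * (U + V) := by
    have h2 : (a:ℝ) * ((2 + U + V) * L1) ≤ a * ((U + V) * L2) := by
      apply mul_le_mul_of_nonneg_left key (by positivity)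
    -- a*(2+U+V)*L1 = (2+U+V)* (b*(L2-L1))
    nlinarith [hcon, hL2L1, mul_le_mul_of_nonneg_left key (show (0:ℝ) ≤ a by positivity),
      mul_pos hV0 hL2L1]
  -- translate : U + V = 1/t + 1/s - 2
  have eU : U = 1/t - 1 := by rw [hU]; field_simp
  have eV : V = 1/s - 1 := by rw [hV]; field_simp
  rw [eU, eV] at hUVb
  have hst : 0 < s * t := by positivity
  -- a * (1/t + 1/s - 2) ≥ 2b  ⟹  a(s+t) - 2a st ≥ 2b st
  have := mul_le_mul_of_nonneg_right hUVb (le_of_lt hst)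
  have expand : (a:ℝ) * (1/t - 1 + (1/s - 1)) * (s*t) = a * (s + t) - 2*a*(s*t) := by
    field_simp; ring
  nlinarith [this, expand]

/-- Construct a global continuous monotone inverse of a function strictly monotone on [A,B]. -/
lemma exists_global_inverse (A B : ℝ) (φ : ℝ → ℝ) (hAB : A ≤ B)
    (hm : StrictMonoOn φ (Icc A B)) (hc : ContinuousOn φ (Icc A B)) :
    ∃ g : ℝ → ℝ, Continuous g ∧ Monotone g ∧ (∀ t ∈ Icc A B, g (φ t) = t) ∧
      (∀ l ∈ Icc (φ A) (φ B), g l ∈ Icc A B ∧ φ (g l) = l) := by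
  classical
  have hAmem : A ∈ Icc A B := left_mem_Icc.2 hAB
  have hBmem : B ∈ Icc A B := right_mem_Icc.2 hAB
  have hφAB : φ A ≤ φ B := hm.monotoneOn hAmem hBmem hAB
  set iv : ℝ → ℝ := fun l => sSup {t | t ∈ Icc A B ∧ φ t ≤ l} with hiv
  set clamp : ℝ → ℝ := fun l => max (φ A) (min l (φ B)) with hclamp
  set ramp : ℝ → ℝ := fun l => min (l - φ A) 0 + max (l - φ B) 0 with hramp
  set g : ℝ → ℝ := fun l => iv (clamp l) + ramp l with hg
  -- basic facts about iv on [φ A, φ B]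
  have hne : ∀ l, φ A ≤ l → (A ∈ {t | t ∈ Icc A B ∧ φ t ≤ l}) := fun l hl => ⟨hAmem, hl⟩
  have hbdd : ∀ l, BddAbove {t | t ∈ Icc A B ∧ φ t ≤ l} := by
    intro l; exact ⟨B, fun x hx => hx.1.2⟩
  have hiv_mem : ∀ l ∈ Icc (φ A) (φ B), iv l ∈ Icc A B := by
    intro l hl
    constructor
    · exact le_csSup (hbdd l) (hne l hl.1)
    · exact csSup_le ⟨A, hne l hl.1⟩ (fun x hx => hx.1.2)
  have hiv_phi : ∀ t ∈ Icc A B, iv (φ t) = t := by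
    intro t ht
    apply le_antisymm
    · apply csSup_le ⟨A, hne _ (hm.monotoneOn hAmem ht ht.1)⟩
      intro x hx
      by_contra hlt
      push_neg at hlt
      exact absurd (hm ht hx.1 hlt) (not_lt.2 hx.2)
    · exact le_csSup (hbdd _) ⟨ht, le_refl _⟩
  have hphi_iv : ∀ l ∈ Icc (φ A) (φ B), φ (iv l) = l := by
    intro l hl
    obtain ⟨t, ht, hφt⟩ := intermediate_value_Icc hAB hc hl
    rw [← hφt, hiv_phi t ht, hφt]
  have hiv_mono : MonotoneOn iv (Icc (φ A) (φ B)) := by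
    intro l1 h1 l2 h2 h12
    exact csSup_le_csSup (hbdd l2) ⟨A, hne l1 h1.1⟩ (fun x hx => ⟨hx.1, le_trans hx.2 h12⟩)
  have hclamp_mem : ∀ l, clamp l ∈ Icc (φ A) (φ B) := by
    intro l
    constructor
    · exact le_max_left _ _
    · simp only [hclamp, max_le_iff]
      exact ⟨hφAB, min_le_right _ _⟩
  have hclamp_mono : Monotone clamp := by
    intro x y hxy
    exact max_le_max (le_refl _) (min_le_min hxy (le_refl _))
  have hramp_mono : Monotone ramp := by
    intro x y hxy
    exact add_le_add (min_le_min (by linarith) (le_refl _)) (max_le_max (by linarith) (le_refl _))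
  have hg_mono : Monotone g := by
    intro x y hxy
    exact add_le_add (hiv_mono (hclamp_mem x) (hclamp_mem y) (hclamp_mono hxy)) (hramp_mono hxy)
  -- for l in [φ A, φ B] : clamp l = l, ramp l = 0
  have hg_eq : ∀ l ∈ Icc (φ A) (φ B), g l = iv l := by
    intro l hl
    have h1 : clamp l = l := by
      simp only [hclamp]
      rw [min_eq_left hl.2, max_eq_right hl.1]
    have h2 : ramp l = 0 := by
      simp only [hramp]
      rw [min_eq_right (by linarith [hl.1]), max_eq_right (by linarith [hl.2])]
      ring
    rw [hg]; simp only [h1, h2]; ring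
  -- surjectivity
  have hg_surj : Function.Surjective g := by
    intro y
    rcases le_or_gt y A with hy | hy
    · refine ⟨φ A - (A - y), ?_⟩
      have hle : φ A - (A - y) ≤ φ A := by linarith
      simp only [hg]
      have h1 : clamp (φ A - (A - y)) = φ A := by
        simp only [hclamp]
        rw [min_eq_left (by linarith), max_eq_left (by linarith)]
      have h2 : ramp (φ A - (A - y)) = -(A - y) := by
        simp only [hramp]
        rw [min_eq_left (by linarith), max_eq_right (by linarith)]
        ring
      rw [h1, h2, hiv_phi A hAmem]
      ring
    · rcases le_or_gt y B with hy2 | hy2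
      · refine ⟨φ y, ?_⟩
        have hymem : y ∈ Icc A B := ⟨le_of_lt hy, hy2⟩
        rw [hg_eq (φ y) ⟨hm.monotoneOn hAmem hymem (le_of_lt hy), hm.monotoneOn hymem hBmem hy2⟩]
        exact hiv_phi y hymem
      · refine ⟨φ B + (y - B), ?_⟩
        simp only [hg]
        have h1 : clamp (φ B + (y - B)) = φ B := by
          simp only [hclamp]
          rw [max_eq_right]
          · rw [min_eq_right (by linarith)]
          · rw [min_eq_right (by linarith)]; exact hφAB
        have h2 : ramp (φ B + (y - B)) = y - B := by
          simp only [hramp]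
          rw [min_eq_right (by linarith), max_eq_left (by linarith)]
          ring
        rw [h1, h2, hiv_phi B hBmem]
        ring
  have hg_cont : Continuous g := hg_mono.continuous_of_surjective hg_surj
  refine ⟨g, hg_cont, hg_mono, ?_, ?_⟩
  · intro t ht
    rw [hg_eq (φ t) ⟨hm.monotoneOn hAmem ht ht.1, hm.monotoneOn ht hBmem ht.2⟩]
    exact hiv_phi t ht
  · intro l hl
    rw [hg_eq l hl]
    exact ⟨hiv_mem l hl, hphi_iv l hl⟩

noncomputable section ClaimI

def phiF (a b : ℕ) : ℝ → ℝ := fun t => t^a * (1-t)^b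
def fF (a b : ℕ) : ℝ → ℝ := fun t => t^a * (1-t)^(b-1)
def phiD (a b : ℕ) : ℝ → ℝ := fun t => t^(a-1) * (1-t)^(b-1) * ((a:ℝ) - ((a:ℝ)+(b:ℝ)) * t)

variable {a b : ℕ}

lemma phi_hasDeriv (ha : 1 ≤ a) (hb : 1 ≤ b) (t : ℝ) :
    HasDerivAt (phiF a b) (phiD a b t) t := by
  have h1 : HasDerivAt (fun t : ℝ => t^a) ((a:ℝ) * t^(a-1)) t := hasDerivAt_pow a t
  have h2 : HasDerivAt (fun t : ℝ => (1-t)^b) (-((b:ℝ) * (1-t)^(b-1))) t := by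
    have hb1 : HasDerivAt (fun t : ℝ => 1 - t) (-1) t := by
      simpa using (hasDerivAt_id t).const_sub 1
    have := (hasDerivAt_pow b (1-t)).comp t hb1
    exact this.congr_deriv (by ring)
  have := h1.mul h2
  have e1 : t^a = t^(a-1) * t := by
    conv_lhs => rw [show a = (a-1)+1 by omega]
    rw [pow_succ]
  have e2 : (1-t)^b = (1-t)^(b-1) * (1-t) := by
    conv_lhs => rw [show b = (b-1)+1 by omega]
    rw [pow_succ]
  unfold phiF phiD
  refine this.congr_deriv ?_
  rw [e1, e2]; ring

lemma phi_cont : Continuous (phiF a b) :=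
  (continuous_pow a).mul ((continuous_const.sub continuous_id).pow b)

lemma fF_cont : Continuous (fF a b) :=
  (continuous_pow a).mul ((continuous_const.sub continuous_id).pow (b-1))

lemma phiD_cont : Continuous (phiD a b) :=
  ((continuous_pow _).mul ((continuous_const.sub continuous_id).pow _)).mul
    (continuous_const.sub (continuous_const.mul continuous_id))

lemma fF_nonneg (t : ℝ) (h0 : 0 ≤ t) (h1 : t ≤ 1) : 0 ≤ fF a b t := by
  unfold fF
  have : (0:ℝ) ≤ 1 - t := by linarith
  positivity

lemma fF_le_one (t : ℝ) (h0 : 0 ≤ t) (h1 : t ≤ 1) : fF a b t ≤ 1 := by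
  unfold fF
  have h2 : (0:ℝ) ≤ 1 - t := by linarith
  have h3 : t^a ≤ 1 := pow_le_one₀ h0 h1
  have h4 : (1-t)^(b-1) ≤ 1 := pow_le_one₀ h2 (by linarith)
  nlinarith [pow_nonneg h0 a]

set_option maxHeartbeats 1000000 in
lemma claimI (ha : 1 ≤ a) (hb : 1 ≤ b) :
    ∫ t in (0:ℝ)..((a:ℝ)/((a:ℝ)+(b:ℝ))), fF a b t ≤
      ∫ t in ((a:ℝ)/((a:ℝ)+(b:ℝ)))..1, fF a b t := by
  have ha1 : (1:ℝ) ≤ (a:ℝ) := by exact_mod_cast ha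
  have hb1 : (1:ℝ) ≤ (b:ℝ) := by exact_mod_cast hb
  set N : ℝ := (a:ℝ) + (b:ℝ) with hN
  have hN0 : 0 < N := by rw [hN]; linarith
  set p : ℝ := (a:ℝ)/((a:ℝ)+(b:ℝ)) with hp
  have hNp : N * p = a := by rw [hp, hN]; field_simp
  have hp0 : 0 < p := by rw [hp]; apply div_pos (by linarith) (by linarith)
  have hp1 : p < 1 := by rw [hp, div_lt_one (by linarith)]; linarith
  have hφd : ∀ t : ℝ, HasDerivAt (phiF a b) (phiD a b t) t := phi_hasDeriv ha hb
  -- monotonicity of φ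
  have hφmono : StrictMonoOn (phiF a b) (Icc 0 p) := by
    apply strictMonoOn_of_deriv_pos (convex_Icc _ _) (phi_cont.continuousOn)
    intro t ht
    rw [interior_Icc, mem_Ioo] at ht
    rw [(hφd t).deriv]
    unfold phiD
    have h1 : 0 < 1 - t := by linarith
    have h2 : 0 < (a:ℝ) - N * t := by
      have := mul_lt_mul_of_pos_left ht.2 hN0
      rw [hNp] at this; rw [hN] at this ⊢; linarith
    have h3 : (0:ℝ) < t := ht.1
    rw [hN] at h2
    positivity
  have hφanti : StrictAntiOn (phiF a b) (Icc p 1) := by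
    apply strictAntiOn_of_deriv_neg (convex_Icc _ _) (phi_cont.continuousOn)
    intro t ht
    rw [interior_Icc, mem_Ioo] at ht
    rw [(hφd t).deriv]
    unfold phiD
    have h1 : 0 < 1 - t := by linarith
    have h2 : (a:ℝ) - N * t < 0 := by
      have := mul_lt_mul_of_pos_left ht.1 hN0
      rw [hNp] at this; rw [hN] at this ⊢; linarith
    have h3 : (0:ℝ) < t := lt_trans hp0 ht.1
    have h4 : 0 < t^(a-1) * (1-t)^(b-1) := by positivity
    rw [hN] at h2
    nlinarith
  have hφ0 : phiF a b 0 = 0 := by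
    unfold phiF; simp [zero_pow (by omega : a ≠ 0)]
  have hφ1 : phiF a b 1 = 0 := by
    unfold phiF; simp [zero_pow (by omega : b ≠ 0)]
  set Λ : ℝ := phiF a b p with hΛ
  have hΛ0 : 0 < Λ := by
    rw [hΛ]; unfold phiF
    have h1 : 0 < 1 - p := by linarith
    positivity
  -- inverse on the left
  obtain ⟨tf, htf_cont, htf_mono, htf_inv, htf_inv2⟩ :=
    exists_global_inverse 0 p (phiF a b) (le_of_lt hp0) hφmono phi_cont.continuousOn
  rw [hφ0] at htf_inv2
  -- inverse on the right (via reflection)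
  obtain ⟨sg, hsg_cont, hsg_mono, hsg_inv, hsg_inv2⟩ :=
    exists_global_inverse p 1 (fun u => phiF a b (p + 1 - u)) (le_of_lt hp1)
      (by
        intro u1 h1 u2 h2 h12
        have m1 : p + 1 - u1 ∈ Icc p 1 := ⟨by linarith [h1.2], by linarith [h1.1]⟩
        have m2 : p + 1 - u2 ∈ Icc p 1 := ⟨by linarith [h2.2], by linarith [h2.1]⟩
        exact hφanti m2 m1 (by linarith))
      ((phi_cont.comp (continuous_const.sub continuous_id)).continuousOn)
  simp only [show p + 1 - p = 1 by ring, show p + 1 - 1 = p by ring, hφ1, ← hΛ] at hsg_inv2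
  set sf : ℝ → ℝ := fun l => p + 1 - sg l with hsf
  have hsf_cont : Continuous sf := continuous_const.sub hsg_cont
  have hsf_phi : ∀ s ∈ Icc p 1, sf (phiF a b s) = s := by
    intro s hs
    have he : phiF a b s = phiF a b (p + 1 - (p + 1 - s)) := by norm_num
    simp only [hsf]
    rw [he, hsg_inv (p+1-s) ⟨by linarith [hs.2], by linarith [hs.1]⟩]
    ring
  have hsf_mem : ∀ l ∈ Icc (0:ℝ) Λ, sf l ∈ Icc p 1 ∧ phiF a b (sf l) = l := by
    intro l hl
    obtain ⟨hmem, heq⟩ := hsg_inv2 l hl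
    simp only [hsf]
    exact ⟨⟨by linarith [hmem.2], by linarith [hmem.1]⟩, heq⟩
  have hsf_anti : ∀ l1 l2, l1 ≤ l2 → sf l2 ≤ sf l1 := by
    intro l1 l2 h
    simp only [hsf]
    linarith [hsg_mono h]
  -- main ε-argument
  have key : ∀ ε : ℝ, 0 < ε → ε ≤ p →
      (∫ t in (0:ℝ)..p, fF a b t) ≤ (∫ t in p..(1:ℝ), fF a b t) + ε := by
    intro ε hε hεp
    set t1 : ℝ := p - ε with ht1
    have ht1mem : t1 ∈ Icc (0:ℝ) p := ⟨by linarith, by linarith⟩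
    set lε : ℝ := phiF a b t1 with hlε
    have hlε0 : 0 ≤ lε := by
      rw [hlε, ← hφ0]
      exact hφmono.monotoneOn (left_mem_Icc.2 (le_of_lt hp0)) ht1mem ht1mem.1
    have hlεΛ : lε < Λ := by
      rw [hlε, hΛ]
      exact hφmono ht1mem (right_mem_Icc.2 (le_of_lt hp0)) (by linarith)
    set sε : ℝ := sf lε with hsε
    obtain ⟨hsεmem, hφsε⟩ := hsf_mem lε ⟨hlε0, le_of_lt hlεΛ⟩
    rw [← hsε] at hsεmem hφsε
    have hsεp : p < sε := by
      rcases eq_or_lt_of_le hsεmem.1 with h | h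
      · exfalso
        rw [← h, ← hΛ] at hφsε
        linarith
      · exact h
    set δ : ℝ := sε - p with hδ
    have hδ0 : 0 < δ := by rw [hδ]; linarith
    -- comparison functions
    set Fε : ℝ → ℝ := fun l => tf l / max ((a:ℝ) - N * tf l) (N * ε) with hFε
    set Gε : ℝ → ℝ := fun l => sf l / max (N * sf l - (a:ℝ)) (N * δ) with hGε
    have hFε_cont : Continuous Fε := by
      apply htf_cont.div ((continuous_const.sub (continuous_const.mul htf_cont)).max continuous_const)
      intro x
      exact ne_of_gt (lt_max_of_lt_right (by positivity))
    have hGε_cont : Continuous Gε := by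
      apply hsf_cont.div (((continuous_const.mul hsf_cont).sub continuous_const).max continuous_const)
      intro x
      exact ne_of_gt (lt_max_of_lt_right (by positivity))
    -- left change of variables
    have left_cov : (∫ t in (0:ℝ)..t1, fF a b t) = ∫ l in (0:ℝ)..lε, Fε l := by
      have hcov := intervalIntegral.integral_comp_smul_deriv (a := (0:ℝ)) (b := t1) (f := phiF a b)
        (f' := phiD a b) (g := Fε) (fun x _ => hφd x) phiD_cont.continuousOn hFε_cont
      rw [hφ0, ← hlε] at hcov
      rw [← hcov]
      apply intervalIntegral.integral_congr
      intro x hx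
      rw [uIcc_of_le ht1mem.1] at hx
      have hx0 : 0 ≤ x := hx.1
      have hxt1 : x ≤ t1 := hx.2
      have hxp : x ∈ Icc 0 p := ⟨hx0, by linarith⟩
      have htfx : tf (phiF a b x) = x := htf_inv x hxp
      have hden : N * ε ≤ (a:ℝ) - N * x := by
        have h5 : N * x ≤ N * t1 := mul_le_mul_of_nonneg_left hxt1 (le_of_lt hN0)
        rw [ht1, mul_sub, hNp] at h5
        linarith
      have hden0 : (0:ℝ) < (a:ℝ) - N * x := lt_of_lt_of_le (by positivity) hden
      simp only [Function.comp, hFε, htfx, smul_eq_mul]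
      rw [max_eq_left hden]
      unfold fF phiD
      rw [← mul_div_assoc, eq_div_iff (ne_of_gt hden0)]
      have e1 : x^a = x^(a-1) * x := by
        conv_lhs => rw [show a = (a-1)+1 by omega]
        rw [pow_succ]
      rw [hN, e1]; ring
    -- right change of variables
    have right_cov : (∫ s in sε..(1:ℝ), fF a b s) = ∫ l in (0:ℝ)..lε, Gε l := by
      have hcov := intervalIntegral.integral_comp_smul_deriv (a := sε) (b := (1:ℝ)) (f := phiF a b)
        (f' := phiD a b) (g := Gε) (fun x _ => hφd x) phiD_cont.continuousOn hGε_cont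
      rw [hφ1, hφsε] at hcov
      rw [integral_symm (0:ℝ) lε] at hcov
      have goal2 : (∫ s in sε..(1:ℝ), fF a b s) = -∫ x in sε..(1:ℝ), phiD a b x • (Gε ∘ phiF a b) x := by
        rw [← intervalIntegral.integral_neg]
        apply intervalIntegral.integral_congr
        intro x hx
        rw [uIcc_of_le hsεmem.2] at hx
        have hxs : sε ≤ x := hx.1
        have hx1 : x ≤ 1 := hx.2
        have hxmem : x ∈ Icc p 1 := ⟨le_trans hsεmem.1 hxs, hx1⟩
        have hsfx : sf (phiF a b x) = x := hsf_phi x hxmem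
        have hden : N * δ ≤ N * x - (a:ℝ) := by
          have h5 : N * sε ≤ N * x := mul_le_mul_of_nonneg_left hxs (le_of_lt hN0)
          have h6 : N * sε = (a:ℝ) + N * δ := by rw [hδ, ← hNp]; ring
          linarith
        have hden0 : (0:ℝ) < N * x - (a:ℝ) := lt_of_lt_of_le (by positivity) hden
        simp only [Function.comp, hGε, hsfx, smul_eq_mul]
        rw [max_eq_left hden]
        unfold fF phiD
        rw [← mul_div_assoc, ← neg_div, eq_div_iff (ne_of_gt hden0)]
        have e1 : x^a = x^(a-1) * x := by
          conv_lhs => rw [show a = (a-1)+1 by omega]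
          rw [pow_succ]
        rw [hN, e1]; ring
      rw [goal2, hcov, neg_neg]
    -- pointwise comparison Fε ≤ Gε on [0, lε]
    have hcomp : (∫ l in (0:ℝ)..lε, Fε l) ≤ ∫ l in (0:ℝ)..lε, Gε l := by
      apply intervalIntegral.integral_mono_on hlε0 (hFε_cont.intervalIntegrable _ _) (hGε_cont.intervalIntegrable _ _)
      intro l hl
      have hlΛ : l ∈ Icc (0:ℝ) Λ := ⟨hl.1, le_trans hl.2 (le_of_lt hlεΛ)⟩
      obtain ⟨htl_mem, hφtl⟩ := htf_inv2 l (by rw [← hΛ]; exact hlΛ)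
      obtain ⟨hsl_mem, hφsl⟩ := hsf_mem l hlΛ
      have h7 : tf lε = t1 := by rw [hlε]; exact htf_inv t1 ht1mem
      have hts1 : tf l ≤ t1 := h7 ▸ htf_mono hl.2
      have hss : sε ≤ sf l := by rw [hsε]; exact hsf_anti l lε hl.2
      have hdenF : N * ε ≤ (a:ℝ) - N * tf l := by
        have h5 : N * tf l ≤ N * t1 := mul_le_mul_of_nonneg_left hts1 (le_of_lt hN0)
        rw [ht1, mul_sub, hNp] at h5
        linarith
      have hdenG : N * δ ≤ N * sf l - (a:ℝ) := by
        have h5 : N * sε ≤ N * sf l := mul_le_mul_of_nonneg_left hss (le_of_lt hN0)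
        have h6 : N * sε = (a:ℝ) + N * δ := by rw [hδ, ← hNp]; ring
        linarith
      have hdF0 : (0:ℝ) < (a:ℝ) - N * tf l := lt_of_lt_of_le (by positivity) hdenF
      have hdG0 : (0:ℝ) < N * sf l - (a:ℝ) := lt_of_lt_of_le (by positivity) hdenG
      simp only [hFε, hGε]
      rw [max_eq_left hdenF, max_eq_left hdenG]
      rcases eq_or_lt_of_le htl_mem.1 with h0 | h0
      · -- tf l = 0
        rw [← h0, zero_div]
        apply div_nonneg (by linarith [hsl_mem.1]) (le_of_lt hdG0)
      · -- 0 < tf l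
        have hl0 : 0 < l := by
          rw [← hφtl]
          unfold phiF
          have h8 : tf l < 1 := lt_of_le_of_lt (le_trans hts1 ht1mem.2) hp1
          have h9 : (0:ℝ) < 1 - tf l := by linarith
          positivity
        have hs1 : sf l < 1 := by
          rcases eq_or_lt_of_le hsl_mem.2 with h8 | h8
          · exfalso; rw [h8] at hφsl; rw [hφ1] at hφsl; linarith
          · exact h8
        have htslt : tf l < sf l := by
          calc tf l ≤ t1 := hts1
            _ < p := by rw [ht1]; linarith
            _ < sε := hsεp
            _ ≤ sf l := hss
        have hlev : (tf l)^a * (1 - tf l)^b = (sf l)^a * (1 - sf l)^b := by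
          have e8 : phiF a b (tf l) = phiF a b (sf l) := by rw [hφtl, hφsl]
          unfold phiF at e8
          exact e8
        have hharm := harm ha hb h0 htslt hs1 hlev
        rw [div_le_div_iff₀ hdF0 hdG0]
        rw [hN] at hdF0 hdG0 ⊢
        nlinarith [hharm]
    -- assemble
    have int1 : IntervalIntegrable (fF a b) MeasureTheory.volume 0 t1 :=
      fF_cont.intervalIntegrable _ _
    have int2 : IntervalIntegrable (fF a b) MeasureTheory.volume t1 p :=
      fF_cont.intervalIntegrable _ _
    have int3 : IntervalIntegrable (fF a b) MeasureTheory.volume p sε :=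
      fF_cont.intervalIntegrable _ _
    have int4 : IntervalIntegrable (fF a b) MeasureTheory.volume sε 1 :=
      fF_cont.intervalIntegrable _ _
    have tail1 : (∫ t in t1..p, fF a b t) ≤ ε := by
      have h8 : (∫ t in t1..p, fF a b t) ≤ ∫ t in t1..p, (1:ℝ) := by
        apply intervalIntegral.integral_mono_on (by linarith : t1 ≤ p) int2 (intervalIntegrable_const)
        intro x hx
        exact fF_le_one x (by linarith [hx.1, ht1mem.1]) (by linarith [hx.2])
      rw [intervalIntegral.integral_const, smul_eq_mul, mul_one] at h8
      rw [ht1] at h8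
      linarith
    have tail2 : 0 ≤ ∫ s in p..sε, fF a b s := by
      apply intervalIntegral.integral_nonneg (le_of_lt hsεp)
      intro x hx
      exact fF_nonneg x (by linarith [hx.1]) (by linarith [hx.2, hsεmem.2])
    calc (∫ t in (0:ℝ)..p, fF a b t)
        = (∫ t in (0:ℝ)..t1, fF a b t) + ∫ t in t1..p, fF a b t :=
          (intervalIntegral.integral_add_adjacent_intervals int1 int2).symm
      _ ≤ (∫ t in (0:ℝ)..t1, fF a b t) + ε := by linarith
      _ = (∫ l in (0:ℝ)..lε, Fε l) + ε := by rw [left_cov]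
      _ ≤ (∫ l in (0:ℝ)..lε, Gε l) + ε := by linarith
      _ = (∫ s in sε..(1:ℝ), fF a b s) + ε := by rw [right_cov]
      _ ≤ (∫ s in p..(1:ℝ), fF a b s) + ε := by
          have h9 : (∫ s in p..(1:ℝ), fF a b s) =
              (∫ s in p..sε, fF a b s) + ∫ s in sε..(1:ℝ), fF a b s :=
            (intervalIntegral.integral_add_adjacent_intervals int3 int4).symm
          linarith
  -- conclude from key
  apply le_of_forall_pos_le_add
  intro ε hε
  have hmin : 0 < min ε p := lt_min hε hp0
  have := key (min ε p) hmin (min_le_right _ _)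
  have h10 : min ε p ≤ ε := min_le_left _ _
  linarith

end ClaimI

noncomputable def SF (n c : ℕ) (p : ℝ) : ℝ := ∑ k ∈ Finset.range (c+1), binPMF n p k

lemma binPMF_nonneg {n : ℕ} {p : ℝ} (hp : p ∈ Icc (0:ℝ) 1) (k : ℕ) : 0 ≤ binPMF n p k := by
  unfold binPMF
  have h1 : (0:ℝ) ≤ 1 - p := by linarith [hp.2]
  have h2 : (0:ℝ) ≤ p := hp.1
  positivity

lemma choose_sub_mul {n k : ℕ} (h : k < n) : (n - k) * n.choose k = n * (n-1).choose k := by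
  have hs := Nat.add_one_mul_choose_eq (n-1) (n-k-1)
  rw [show n-1+1 = n by omega, show n-k-1+1 = n-k by omega] at hs
  have h1 : n.choose (n-k) = n.choose k := Nat.choose_symm h.le
  have h2 : (n-1).choose (n-k-1) = (n-1).choose k := by
    rw [show n-k-1 = (n-1) - k by omega]
    exact Nat.choose_symm (by omega)
  rw [h1, h2] at hs
  rw [mul_comm]
  exact hs.symm

lemma succ_mul_choose {n c : ℕ} (hc : c < n) : (c+1) * n.choose (c+1) = n * (n-1).choose c := by
  have := Nat.add_one_mul_choose_eq (n-1) c
  rw [show n-1+1 = n by omega] at this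
  rw [this, mul_comm]

/-- derivative of the partial CDF sum -/
lemma SF_hasDeriv {n : ℕ} (c : ℕ) (hc : c < n) (p : ℝ) :
    HasDerivAt (fun p => SF n c p)
      (-((n:ℝ) * ((n-1).choose c : ℝ) * p^c * (1-p)^(n-1-c))) p := by
  induction c with
  | zero =>
    have h1 : HasDerivAt (fun p : ℝ => (1-p)^n) (-((n:ℝ) * (1-p)^(n-1))) p := by
      have hb1 : HasDerivAt (fun p : ℝ => 1 - p) (-1) p := by
        simpa using (hasDerivAt_id p).const_sub 1
      have := (hasDerivAt_pow n (1-p)).comp p hb1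
      exact this.congr_deriv (by ring)
    have he : (fun p : ℝ => SF n 0 p) = fun p : ℝ => (1-p)^n := by
      funext q
      unfold SF binPMF
      simp
    rw [he]
    simpa using h1
  | succ c ih =>
    have hc' : c < n := by omega
    have ihh := ih hc'
    have he : (fun p : ℝ => SF n (c+1) p) =
        fun p : ℝ => SF n c p + (n.choose (c+1) : ℝ) * p^(c+1) * (1-p)^(n-(c+1)) := by
      funext q
      unfold SF binPMF
      rw [Finset.sum_range_succ]
    rw [he]
    have hterm : HasDerivAt (fun p : ℝ => (n.choose (c+1) : ℝ) * p^(c+1) * (1-p)^(n-(c+1)))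
        ((n.choose (c+1) : ℝ) * (((c+1) : ℝ) * p^c * (1-p)^(n-(c+1))
          - ((n-(c+1) : ℕ) : ℝ) * p^(c+1) * (1-p)^(n-(c+1)-1))) p := by
      have h1 : HasDerivAt (fun p : ℝ => p^(c+1)) (((c+1):ℝ) * p^c) p := by
        simpa using hasDerivAt_pow (c+1) p
      have h2 : HasDerivAt (fun p : ℝ => (1-p)^(n-(c+1))) (-(((n-(c+1):ℕ):ℝ) * (1-p)^(n-(c+1)-1))) p := by
        have hb1 : HasDerivAt (fun p : ℝ => 1 - p) (-1) p := by
          simpa using (hasDerivAt_id p).const_sub 1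
        have := (hasDerivAt_pow (n-(c+1)) (1-p)).comp p hb1
        exact this.congr_deriv (by ring)
      have := (h1.const_mul ((n.choose (c+1)):ℝ)).mul h2
      refine this.congr_deriv ?_
      ring
    have e1 : ((c:ℝ)+1) * (n.choose (c+1) : ℝ) = (n:ℝ) * ((n-1).choose c : ℝ) := by
      exact_mod_cast congrArg (Nat.cast : ℕ → ℝ) (succ_mul_choose hc')
    have e2 : ((n-(c+1):ℕ):ℝ) * (n.choose (c+1) : ℝ) = (n:ℝ) * ((n-1).choose (c+1) : ℝ) := by
      exact_mod_cast congrArg (Nat.cast : ℕ → ℝ) (choose_sub_mul hc)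
    have halg : -((n:ℝ) * ((n-1).choose (c+1) : ℝ) * p^(c+1) * (1-p)^(n-1-(c+1))) =
        -((n:ℝ) * ((n - 1).choose c : ℝ) * p ^ c * (1 - p) ^ (n - 1 - c)) +
        ((n.choose (c+1) : ℝ) * (((c+1) : ℝ) * p^c * (1-p)^(n-(c+1))
          - ((n-(c+1) : ℕ) : ℝ) * p^(c+1) * (1-p)^(n-(c+1)-1))) := by
      rw [show n - 1 - c = n - (c+1) by omega, show n - (c+1) - 1 = n - 1 - (c+1) by omega]
      linear_combination (p^(c+1) * (1-p)^(n-1-(c+1))) * e2 - (p^c * (1-p)^(n-(c+1))) * e1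
    rw [halg]
    exact ihh.add hterm

lemma claimI' {a b : ℕ} (ha : 1 ≤ a) (hb : 1 ≤ b) :
    ∫ t in (0:ℝ)..((a:ℝ)/((a:ℝ)+(b:ℝ))), t^a * (1-t)^(b-1) ≤
      ∫ t in ((a:ℝ)/((a:ℝ)+(b:ℝ)))..1, t^a * (1-t)^(b-1) := by
  have h := claimI (a := a) (b := b) ha hb
  unfold fF at h
  exact h

lemma SF_zero {n c : ℕ} : SF n c 0 = 1 := by
  unfold SF binPMF
  rw [Finset.sum_eq_single 0]
  · simp
  · intro k hk hk0
    simp [zero_pow hk0]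
  · intro h
    simp at h

lemma SF_one {n c : ℕ} (hc : c < n) : SF n c 1 = 0 := by
  unfold SF binPMF
  apply Finset.sum_eq_zero
  intro k hk
  rw [Finset.mem_range] at hk
  have : n - k ≠ 0 := by omega
  simp [zero_pow this]

lemma kern_cont {c e : ℕ} : Continuous (fun t : ℝ => t^c * (1-t)^e) :=
  (continuous_pow c).mul ((continuous_const.sub continuous_id).pow e)

/-- FTC identity for the CDF -/
lemma SF_identity {n c : ℕ} (hc : c < n) (x : ℝ) :
    SF n c x = 1 - (n:ℝ) * ((n-1).choose c : ℝ) * ∫ t in (0:ℝ)..x, t^c * (1-t)^(n-1-c) := by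
  have hint : ∀ y z : ℝ, IntervalIntegrable
      (fun t : ℝ => -((n:ℝ) * ((n-1).choose c : ℝ) * t^c * (1-t)^(n-1-c))) MeasureTheory.volume y z := by
    intro y z
    apply Continuous.intervalIntegrable
    have hcc : Continuous (fun t : ℝ => (-((n:ℝ) * ((n-1).choose c : ℝ))) * (t^c*(1-t)^(n-1-c))) :=
      continuous_const.mul (kern_cont (c := c) (e := n-1-c))
    exact hcc.congr (fun t => by ring)
  have h := intervalIntegral.integral_eq_sub_of_hasDerivAt
    (f := fun p => SF n c p)
    (f' := fun p => -((n:ℝ) * ((n-1).choose c : ℝ) * p^c * (1-p)^(n-1-c)))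
    (fun t _ => SF_hasDeriv c hc t) (hint 0 x)
  rw [SF_zero] at h
  have h2 : (∫ t in (0:ℝ)..x, -((n:ℝ) * ((n-1).choose c : ℝ) * t^c * (1-t)^(n-1-c)))
      = -((n:ℝ) * ((n-1).choose c : ℝ) * ∫ t in (0:ℝ)..x, t^c * (1-t)^(n-1-c)) := by
    rw [← intervalIntegral.integral_const_mul, ← intervalIntegral.integral_neg]
    apply intervalIntegral.integral_congr
    intro t _
    ring
  rw [h2] at h
  linarith

lemma SF_antitone {n c : ℕ} (hc : c < n) {p1 p2 : ℝ} (h0 : 0 ≤ p1) (h12 : p1 ≤ p2) (h21 : p2 ≤ 1) :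
    SF n c p2 ≤ SF n c p1 := by
  rw [SF_identity hc p1, SF_identity hc p2]
  have hsplit : (∫ t in (0:ℝ)..p2, t^c * (1-t)^(n-1-c)) =
      (∫ t in (0:ℝ)..p1, t^c * (1-t)^(n-1-c)) + ∫ t in p1..p2, t^c * (1-t)^(n-1-c) :=
    (intervalIntegral.integral_add_adjacent_intervals
      (kern_cont.intervalIntegrable _ _) (kern_cont.intervalIntegrable _ _)).symm
  have hpos : 0 ≤ ∫ t in p1..p2, t^c * (1-t)^(n-1-c) := by
    apply intervalIntegral.integral_nonneg h12
    intro u hu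
    have h1 : 0 ≤ u := le_trans h0 hu.1
    have h2 : (0:ℝ) ≤ 1 - u := by linarith [le_trans hu.2 h21]
    positivity
  have hco : (0:ℝ) ≤ (n:ℝ) * ((n-1).choose c : ℝ) := by positivity
  rw [hsplit]
  nlinarith [mul_le_mul_of_nonneg_left hpos hco]

/-- P(X ≤ c) ≥ 1/2 at p = c/n -/
lemma SF_claimA {n c : ℕ} (hc1 : 1 ≤ c) (hcn : c < n) : 1/2 ≤ SF n c ((c:ℝ)/(n:ℝ)) := by
  set a := c with ha
  set b := n - c with hb
  have hab : (a:ℝ) + (b:ℝ) = (n:ℝ) := by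
    rw [ha, hb]; push_cast [Nat.cast_sub (show c ≤ n by omega)]; ring
  have hI := claimI' (a := a) (b := b) hc1 (by omega)
  rw [hab] at hI
  have hb1 : b - 1 = n - 1 - c := by omega
  rw [hb1] at hI
  -- hI : ∫ 0..c/n ≤ ∫ c/n..1 for kernel t^c (1-t)^(n-1-c)
  rw [SF_identity hcn]
  have htot : (∫ t in (0:ℝ)..((c:ℝ)/(n:ℝ)), t^c * (1-t)^(n-1-c)) +
      (∫ t in ((c:ℝ)/(n:ℝ))..1, t^c * (1-t)^(n-1-c)) = ∫ t in (0:ℝ)..(1:ℝ), t^c * (1-t)^(n-1-c) :=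
    intervalIntegral.integral_add_adjacent_intervals
      (kern_cont.intervalIntegrable _ _) (kern_cont.intervalIntegrable _ _)
  have hco1 : (n:ℝ) * ((n-1).choose c : ℝ) * ∫ t in (0:ℝ)..(1:ℝ), t^c * (1-t)^(n-1-c) = 1 := by
    have := SF_identity hcn 1
    rw [SF_one hcn] at this
    linarith
  have hco : (0:ℝ) ≤ (n:ℝ) * ((n-1).choose c : ℝ) := by positivity
  nlinarith [mul_le_mul_of_nonneg_left hI hco]

/-- SF n c p = 1 for c ≥ n, p arbitrary -/
lemma SF_total {n c : ℕ} (hc : n ≤ c) (p : ℝ) : SF n c p = 1 := by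
  unfold SF binPMF
  have hsplit : Finset.range (c+1) = Finset.range (n+1) ∪ Finset.Ico (n+1) (c+1) := by
    rw [Finset.range_eq_Ico, Finset.range_eq_Ico]
    rw [Finset.Ico_union_Ico_eq_Ico (by omega) (by omega)]
  rw [hsplit, Finset.sum_union (by
    rw [Finset.range_eq_Ico]
    exact Finset.Ico_disjoint_Ico_consecutive 0 (n+1) (c+1))]
  have h2 : ∑ k ∈ Finset.Ico (n+1) (c+1), (n.choose k : ℝ) * p ^ k * (1 - p) ^ (n - k) = 0 := by
    apply Finset.sum_eq_zero
    intro k hk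
    rw [Finset.mem_Ico] at hk
    rw [Nat.choose_eq_zero_of_lt (by omega)]
    simp
  rw [h2, add_zero]
  have h3 : ∑ k ∈ Finset.range (n+1), (n.choose k : ℝ) * p ^ k * (1 - p) ^ (n - k)
      = (p + (1-p))^n := by
    rw [add_pow]
    apply Finset.sum_congr rfl
    intro k hk
    ring
  rw [h3]
  norm_num

/-- main: for any c with np ≤ c, CDF at c is at least 1/2 -/
lemma SF_main {n c : ℕ} {p : ℝ} (hp : p ∈ Icc (0:ℝ) 1) (hpc : (n:ℝ) * p ≤ c) :
    1/2 ≤ SF n c p := by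
  rcases le_or_gt n c with h | h
  · rw [SF_total h]; norm_num
  · rcases Nat.eq_zero_or_pos c with h0 | h0
    · -- c = 0 : then n ≥ 1, p ≤ 0 so p = 0
      subst h0
      have hn0 : (0:ℝ) < (n:ℝ) := by exact_mod_cast h
      have hp0 : p = 0 := by
        push_cast at hpc
        rcases eq_or_lt_of_le hp.1 with h1 | h1
        · exact h1.symm
        · exfalso; nlinarith [mul_pos hn0 h1]
      rw [hp0, SF_zero]; norm_num
    · have hn0 : (0:ℝ) < (n:ℝ) := by exact_mod_cast (by omega : 0 < n)
      have hcn : (c:ℝ)/(n:ℝ) ≤ 1 := by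
        rw [div_le_one hn0]
        exact_mod_cast (le_of_lt h)
      have hpc' : p ≤ (c:ℝ)/(n:ℝ) := by
        rw [le_div_iff₀ hn0]
        linarith [hpc]
      calc (1:ℝ)/2 ≤ SF n c ((c:ℝ)/(n:ℝ)) := SF_claimA h0 h
        _ ≤ SF n c p := SF_antitone h hp.1 hpc' hcn

lemma SF_symm {n c : ℕ} (hc : c < n) (p : ℝ) : SF n c p = 1 - SF n (n-1-c) (1-p) := by
  have htot := SF_total (le_refl n) p
  have hsplit : SF n n p = SF n c p + ∑ k ∈ Finset.Ico (c+1) (n+1), binPMF n p k := by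
    unfold SF
    rw [← Finset.sum_range_add_sum_Ico _ (by omega : c+1 ≤ n+1)]
  have hre : (∑ k ∈ Finset.Ico (c+1) (n+1), binPMF n p k) = SF n (n-1-c) (1-p) := by
    rw [Finset.sum_Ico_eq_sum_range]
    unfold SF
    rw [show n+1-(c+1) = n-c by omega, show n-1-c+1 = n-c by omega,
      ← Finset.sum_range_reflect (fun i => binPMF n (1-p) i) (n-c)]
    apply Finset.sum_congr rfl
    intro j hj
    rw [Finset.mem_range] at hj
    unfold binPMF
    rw [show (1:ℝ)-(1-p) = p from by ring,
      show n - (n-c-1-j) = c+1+j by omega,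
      show n.choose (n-c-1-j) = n.choose (c+1+j) from by
        rw [show n-c-1-j = n - (c+1+j) by omega]
        exact Nat.choose_symm (by omega),
      show n - (c+1+j) = n-c-1-j by omega]
    ring
  rw [hre] at hsplit
  rw [htot] at hsplit
  linarith



lemma binCDF_eq_SF {n : ℕ} {p : ℝ} {s : ℤ} (hs : 0 ≤ s) : binCDF n p s = SF n s.toNat p := by
  unfold binCDF SF
  congr 1
  congr 1
  omega

lemma binCDF_neg {n : ℕ} {p : ℝ} {s : ℤ} (hs : s < 0) : binCDF n p s = 0 := by
  unfold binCDF
  rw [show (s+1).toNat = 0 by omega]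
  simp


end BinomialMedianAux

/-- The median of `Binomial(n,p)` is either `⌊np⌋` or `⌈np⌉`
(an integer `m` is a median iff `P(X ≤ m) ≥ 1/2` and `P(X ≥ m) ≥ 1/2`);
in particular `F^B_{n,p}(s) ≥ 1/2` for every integer `s ≥ ⌈np⌉`. -/
theorem binomial_median (n : ℕ) (p : ℝ) (hp : p ∈ Set.Icc (0 : ℝ) 1) :
    (∃ m : ℤ, (m = ⌊(n : ℝ) * p⌋ ∨ m = ⌈(n : ℝ) * p⌉) ∧
      binCDF n p m ≥ 1 / 2 ∧ 1 - binCDF n p (m - 1) ≥ 1 / 2) ∧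
    (∀ s : ℤ, ⌈(n : ℝ) * p⌉ ≤ s → binCDF n p s ≥ 1 / 2) := by
  have hnp0 : 0 ≤ (n:ℝ) * p := mul_nonneg (by positivity) hp.1
  have hnpn : (n:ℝ) * p ≤ n := by nlinarith [hp.2, hp.1, (show (0:ℝ) ≤ n by positivity)]
  have hceil0 : 0 ≤ ⌈(n:ℝ) * p⌉ := Int.ceil_nonneg hnp0
  have hfloor0 : 0 ≤ ⌊(n:ℝ) * p⌋ := Int.floor_nonneg.2 hnp0
  have hfloorn : ⌊(n:ℝ) * p⌋ ≤ n := by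
    have := Int.floor_le_floor hnpn
    simpa using this.trans_eq (Int.floor_intCast n)
  -- part 2
  have part2 : ∀ s : ℤ, ⌈(n : ℝ) * p⌉ ≤ s → binCDF n p s ≥ 1 / 2 := by
    intro s hs
    have hs0 : 0 ≤ s := le_trans hceil0 hs
    rw [binCDF_eq_SF hs0]
    apply SF_main hp
    calc (n:ℝ) * p ≤ (⌈(n:ℝ)*p⌉ : ℝ) := Int.le_ceil _
      _ ≤ (s : ℝ) := by exact_mod_cast hs
      _ = (s.toNat : ℝ) := by exact_mod_cast (Int.toNat_of_nonneg hs0).symm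
  -- floor bound : binCDF at floor - 1 is ≤ 1/2
  have hfloor : binCDF n p (⌊(n:ℝ) * p⌋ - 1) ≤ 1/2 := by
    rcases eq_or_lt_of_le hfloor0 with h0 | h0
    · rw [binCDF_neg (by omega)]
      norm_num
    · -- 1 ≤ floor
      have hf1 : 1 ≤ ⌊(n:ℝ) * p⌋ := h0
      have hn1 : 1 ≤ n := by
        by_contra hn
        have hn0 : n = 0 := by omega
        rw [hn0] at hf1
        norm_num at hf1
      set c' : ℕ := (⌊(n:ℝ) * p⌋ - 1).toNat with hc'
      have hc'n : c' < n := by omega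
      rw [binCDF_eq_SF (by omega), ← hc']
      rw [SF_symm hc'n]
      have hgoal : 1/2 ≤ SF n (n-1-c') (1-p) := by
        apply SF_main ⟨by linarith [hp.2], by linarith [hp.1]⟩
        have he : ((n-1-c' : ℕ) : ℝ) = (n:ℝ) - (⌊(n:ℝ)*p⌋ : ℝ) := by
          rw [show n-1-c' = n - (⌊(n:ℝ)*p⌋).toNat by omega, Nat.cast_sub (by omega)]
          congr 1
          exact_mod_cast Int.toNat_of_nonneg hfloor0
        rw [he]
        have := Int.floor_le ((n:ℝ) * p)
        nlinarith [this]
      linarith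
  refine ⟨?_, part2⟩
  by_cases hcase : binCDF n p (⌈(n:ℝ)*p⌉ - 1) ≤ 1/2
  · exact ⟨⌈(n:ℝ)*p⌉, Or.inr rfl, part2 _ le_rfl, by linarith⟩
  · refine ⟨⌊(n:ℝ)*p⌋, Or.inl rfl, ?_, by linarith [hfloor]⟩
    push_neg at hcase
    rcases eq_or_lt_of_le (Int.floor_le_ceil ((n:ℝ)*p)) with heq | hlt
    · rw [heq]; exact part2 _ le_rfl
    · have : ⌈(n:ℝ)*p⌉ ≤ ⌊(n:ℝ)*p⌋ + 1 := Int.ceil_le_floor_add_one _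
      have heq2 : ⌊(n:ℝ)*p⌋ = ⌈(n:ℝ)*p⌉ - 1 := by omega
      rw [heq2]
      linarith
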